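/- Let μ be a positive finite measure on the unit circle satisfying μ([θ-t,θ+t]) ≤ t·g(t) for all θ and t ∈ (0,π], where g : (0,π] → (0,∞) is continuous and non-increasing. Let S(z) = exp(-∫_T (e^{it}+z)/(e^{it}-z) dμ(t)). Then for every r ∈ [0,1) and θ: -log|S(re^{iθ})| ≤ 3π g(π(1-r)). -/

import Mathlib

open MeasureTheory Set Real Complex

instance : Fact (0 < 2 * Real.pi) := ⟨by positivity⟩

/-- The singular inner function of a measure on the circle. -/
noncomputable def singInnerAngle (μ : Measure (AddCircle (2 * Real.pi))) (z : ℂ) : ℂ :=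
  Complex.exp (-∫ t, ((AddCircle.toCircle t : ℂ) + z) /
      ((AddCircle.toCircle t : ℂ) - z) ∂μ)


noncomputable def Pk (r s : ℝ) : ℝ := (1 - r^2)/(1 + r^2 - 2*r*Real.cos s)
noncomputable def hk (r s : ℝ) : ℝ := 2*r*(1-r^2)*Real.sin s/(1 + r^2 - 2*r*Real.cos s)^2
noncomputable def Gk (r s : ℝ) : ℝ := s + 2*Real.arctan (r*Real.sin s/(1 - r*Real.cos s))

lemma denom_pos {r : ℝ} (hr : 0 ≤ r) (hr1 : r < 1) (s : ℝ) :
    0 < 1 + r^2 - 2*r*Real.cos s := by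
  nlinarith [Real.cos_le_one s, Real.neg_one_le_cos s, sq_nonneg (1 - r)]

lemma denom2_pos {r : ℝ} (hr : 0 ≤ r) (hr1 : r < 1) (s : ℝ) : 0 < 1 - r*Real.cos s := by
  nlinarith [Real.cos_le_one s, Real.neg_one_le_cos s]

lemma Pk_nonneg {r : ℝ} (hr : 0 ≤ r) (hr1 : r < 1) (s : ℝ) : 0 ≤ Pk r s := by
  have h := denom_pos hr hr1 s
  have h2 : (0:ℝ) ≤ 1 - r^2 := by nlinarith
  unfold Pk; positivity

lemma hk_nonneg {r : ℝ} (hr : 0 ≤ r) (hr1 : r < 1) {s : ℝ} (hs : 0 ≤ s) (hs' : s ≤ π) :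
    0 ≤ hk r s := by
  have h1 := Real.sin_nonneg_of_nonneg_of_le_pi hs hs'
  have h2 : (0:ℝ) ≤ 1 - r^2 := by nlinarith
  unfold hk; positivity

lemma hasDerivAt_Pk {r : ℝ} (hr : 0 ≤ r) (hr1 : r < 1) (s : ℝ) :
    HasDerivAt (Pk r) (-(hk r s)) s := by
  have hd := denom_pos hr hr1 s
  have h1 : HasDerivAt (fun s => 1 + r^2 - 2*r*Real.cos s) (2*r*Real.sin s) s := by
    simpa using ((Real.hasDerivAt_cos s).const_mul (2*r)).const_sub (1 + r^2)
  have h2 := (hasDerivAt_const s (1 - r^2)).div h1 hd.ne'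
  refine h2.congr_deriv ?_
  unfold hk
  field_simp
  ring

lemma hasDerivAt_Gk {r : ℝ} (hr : 0 ≤ r) (hr1 : r < 1) (s : ℝ) :
    HasDerivAt (Gk r) (Pk r s) s := by
  have hd := denom2_pos hr hr1 s
  have hD := denom_pos hr hr1 s
  have hq : HasDerivAt (fun s => r*Real.sin s/(1 - r*Real.cos s))
      ((r*Real.cos s*(1 - r*Real.cos s) - r*Real.sin s*(r*Real.sin s))/(1 - r*Real.cos s)^2) s := by
    have hn : HasDerivAt (fun s => r*Real.sin s) (r*Real.cos s) s :=
      (Real.hasDerivAt_sin s).const_mul r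
    have hm : HasDerivAt (fun s => 1 - r*Real.cos s) (r*Real.sin s) s := by
      simpa using ((Real.hasDerivAt_cos s).const_mul r).const_sub 1
    exact hn.div hm hd.ne'
  have ha := (Real.hasDerivAt_arctan (r*Real.sin s/(1 - r*Real.cos s))).comp s hq
  have hfin := (hasDerivAt_id s).add (ha.const_mul 2)
  have hGk : HasDerivAt (Gk r)
      (1 + 2 * (1 / (1 + (r * Real.sin s / (1 - r * Real.cos s)) ^ 2) *
        ((r * Real.cos s * (1 - r * Real.cos s) - r * Real.sin s * (r * Real.sin s)) /
          (1 - r * Real.cos s) ^ 2))) s := by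
    unfold Gk
    exact hfin
  convert hGk using 1
  have hsq : Real.sin s ^ 2 + Real.cos s ^ 2 = 1 := Real.sin_sq_add_cos_sq s
  unfold Pk
  have h2 : 1 + (r * Real.sin s / (1 - r * Real.cos s)) ^ 2
      = (1 + r^2 - 2*r*Real.cos s) / (1 - r*Real.cos s)^2 := by
    field_simp
    nlinarith [hsq]
  rw [h2]
  field_simp
  have hD2 : (1 + r ^ 2 - r * 2 * Real.cos s) ≠ 0 := by linarith
  rw [one_add_div hD2]
  congr 1
  linear_combination (2*r^2) * hsq

lemma continuous_Pk {r : ℝ} (hr : 0 ≤ r) (hr1 : r < 1) : Continuous (Pk r) := by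
  unfold Pk
  exact continuous_const.div (by continuity) (fun s => (denom_pos hr hr1 s).ne')

lemma continuous_hk {r : ℝ} (hr : 0 ≤ r) (hr1 : r < 1) : Continuous (hk r) := by
  unfold hk
  exact (by continuity : Continuous fun s => 2*r*(1-r^2)*Real.sin s).div (by continuity)
    (fun s => (pow_ne_zero 2 (denom_pos hr hr1 s).ne'))

lemma integral_hk {r : ℝ} (hr : 0 ≤ r) (hr1 : r < 1) (d e : ℝ) :
    ∫ u in d..e, hk r u = Pk r d - Pk r e := by
  have := intervalIntegral.integral_eq_sub_of_hasDerivAt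
    (f := fun u => -(Pk r u)) (f' := hk r)
    (fun x _ => by have h := (hasDerivAt_Pk hr hr1 x).neg; rwa [neg_neg] at h)
    ((continuous_hk hr hr1).intervalIntegrable d e)
  linarith [this]

lemma integral_mul_hk {r : ℝ} (hr : 0 ≤ r) (hr1 : r < 1) (e : ℝ) :
    ∫ u in e..π, u * hk r u = (Gk r π - π * Pk r π) - (Gk r e - e * Pk r e) := by
  have := intervalIntegral.integral_eq_sub_of_hasDerivAt
    (f := fun u => Gk r u - u * Pk r u) (f' := fun u => u * hk r u)
    (fun x _ => by
      have h1 := (hasDerivAt_Gk hr hr1 x).sub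
        (((hasDerivAt_id x).mul (hasDerivAt_Pk hr hr1 x)))
      refine h1.congr_deriv ?_
      simp only [id]
      ring)
    (((continuous_id.mul (continuous_hk hr hr1))).intervalIntegrable e π)
  simpa using this

lemma Gk_pi {r : ℝ} : Gk r π = π := by
  simp [Gk]

lemma Gk_nonneg {r : ℝ} (hr : 0 ≤ r) (hr1 : r < 1) {e : ℝ} (he : 0 ≤ e) (he' : e ≤ π) :
    0 ≤ Gk r e := by
  have h1 := Real.sin_nonneg_of_nonneg_of_le_pi he he'
  have h2 := denom2_pos hr hr1 e
  have : 0 ≤ Real.arctan (r*Real.sin e/(1 - r*Real.cos e)) := by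
    rw [← Real.arctan_zero]
    exact Real.arctan_strictMono.monotone (by positivity)
  unfold Gk
  linarith

lemma cos_norm_addCircle (x : ℝ) : Real.cos ‖(↑x : AddCircle (2*π))‖ = Real.cos x := by
  rw [AddCircle.norm_eq, Real.cos_abs, Real.cos_sub_int_mul_two_pi]

lemma norm_addCircle_le_pi (x : ℝ) : ‖(↑x : AddCircle (2*π))‖ ≤ π := by
  rw [AddCircle.norm_eq]
  have h := abs_sub_round ((2*π)⁻¹ * x)
  have hπ : (0:ℝ) < π := Real.pi_pos
  have hx : x - (round ((2*π)⁻¹ * x) : ℤ) * (2*π)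
      = (2*π) * ((2*π)⁻¹ * x - (round ((2*π)⁻¹ * x) : ℤ)) := by
    field_simp
  rw [hx, abs_mul, abs_of_pos (by positivity : (0:ℝ) < 2*π)]
  nlinarith


lemma re_div_eq_Pk {r : ℝ} (hr : 0 ≤ r) (hr1 : r < 1) (a b : ℝ) :
    ((Complex.exp (↑a * I) + ↑r * Complex.exp (↑b * I)) /
      (Complex.exp (↑a * I) - ↑r * Complex.exp (↑b * I))).re = Pk r (a - b) := by
  have hD : (Real.cos a - r * Real.cos b) * (Real.cos a - r * Real.cos b)
      + (Real.sin a - r * Real.sin b) * (Real.sin a - r * Real.sin b)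
      = 1 + r^2 - 2*r*Real.cos (a - b) := by
    rw [Real.cos_sub]
    linear_combination Real.sin_sq_add_cos_sq a + r^2 * Real.sin_sq_add_cos_sq b
  rw [Complex.div_re]
  simp only [Complex.add_re, Complex.sub_re, Complex.add_im, Complex.sub_im,
    Complex.mul_re, Complex.mul_im, Complex.ofReal_re, Complex.ofReal_im,
    Complex.exp_ofReal_mul_I_re, Complex.exp_ofReal_mul_I_im, Complex.normSq_apply]
  simp only [zero_mul, mul_zero, sub_zero, zero_add, add_zero, zero_sub, neg_mul, neg_neg]
  rw [Pk, ← hD, ← add_div]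
  congr 1
  linear_combination Real.sin_sq_add_cos_sq a - r^2 * Real.sin_sq_add_cos_sq b

lemma toCircle_coe_eq (a : ℝ) :
    (AddCircle.toCircle (↑a : AddCircle (2*π)) : ℂ) = Complex.exp (↑a * I) := by
  rw [AddCircle.toCircle_apply_mk, Circle.coe_exp]
  have h : 2*π/(2*π)*a = a := by
    field_simp
  rw [h]


lemma key_est (μ : Measure (AddCircle (2 * Real.pi))) [IsFiniteMeasure μ]
    (g : ℝ → ℝ)
    (hgpos : ∀ t ∈ Set.Ioc (0 : ℝ) Real.pi, 0 < g t)
    (hganti : AntitoneOn g (Set.Ioc (0 : ℝ) Real.pi))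
    (hball : ∀ (θ : AddCircle (2 * Real.pi)), ∀ t ∈ Set.Ioc (0 : ℝ) Real.pi,
      μ (Metric.closedBall θ t) ≤ ENNReal.ofReal (t * g t))
    {r : ℝ} (hr : 0 ≤ r) (hr1 : r < 1) (θ' : AddCircle (2 * Real.pi)) :
    ∫⁻ t, ENNReal.ofReal (Pk r (dist t θ')) ∂μ
      ≤ ENNReal.ofReal (3 * π * g (π * (1 - r))) := by
  set ε : ℝ := π * (1 - r) with hεdef
  have hπ : (0:ℝ) < π := Real.pi_pos
  have hε : 0 < ε := by nlinarith
  have hεπ : ε ≤ π := by nlinarith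
  have hεmem : ε ∈ Set.Ioc (0:ℝ) π := ⟨hε, hεπ⟩
  have hgε : 0 < g ε := hgpos ε hεmem
  have hdistle : ∀ t : AddCircle (2*π), dist t θ' ≤ π := by
    intro t
    have h := norm_addCircle_le_pi
    rw [dist_eq_norm]
    rcases QuotientAddGroup.mk_surjective (t - θ') with ⟨x, hx⟩
    rw [← hx]
    exact h x
  have hd0 : ∀ t : AddCircle (2*π), 0 ≤ dist t θ' := fun t => dist_nonneg
  set c : ℝ → ENNReal := fun u => ENNReal.ofReal (hk r u) with hc
  -- pointwise decomposition
  have hdecomp : ∀ t : AddCircle (2*π), ENNReal.ofReal (Pk r (dist t θ'))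
      = ENNReal.ofReal (Pk r π)
        + ∫⁻ u in Ioc (0:ℝ) π, (Set.Ioi (dist t θ')).indicator c u := by
    intro t
    have h1 : Pk r (dist t θ') = Pk r π + ∫ u in (dist t θ')..π, hk r u := by
      rw [integral_hk hr hr1]; ring
    have hnn : (0:ℝ) ≤ ∫ u in (dist t θ')..π, hk r u := by
      apply intervalIntegral.integral_nonneg (hdistle t)
      intro u hu
      exact hk_nonneg hr hr1 (le_trans (hd0 t) hu.1) hu.2
    have h2 : ∫ u in (dist t θ')..π, hk r u = ∫ u in Ioc (dist t θ') π, hk r u :=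
      intervalIntegral.integral_of_le (hdistle t)
    have h3 : ENNReal.ofReal (∫ u in Ioc (dist t θ') π, hk r u)
        = ∫⁻ u in Ioc (dist t θ') π, c u := by
      apply ofReal_integral_eq_lintegral_ofReal
      · exact (continuous_hk hr hr1).integrableOn_Ioc
      · filter_upwards [ae_restrict_mem measurableSet_Ioc] with u hu
        exact hk_nonneg hr hr1 (le_trans (hd0 t) (le_of_lt hu.1)) hu.2
    have h4 : Ioc (dist t θ') π = Set.Ioi (dist t θ') ∩ Ioc 0 π := by
      ext u
      simp only [mem_Ioc, mem_inter_iff, mem_Ioi]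
      constructor
      · rintro ⟨h5, h6⟩
        exact ⟨h5, lt_of_le_of_lt (hd0 t) h5, h6⟩
      · rintro ⟨h5, _, h6⟩
        exact ⟨h5, h6⟩
    have h5 : ∫⁻ u in Ioc (dist t θ') π, c u
        = ∫⁻ u in Ioc (0:ℝ) π, (Set.Ioi (dist t θ')).indicator c u := by
      rw [lintegral_indicator measurableSet_Ioi c, Measure.restrict_restrict measurableSet_Ioi, h4]
    rw [h1, ENNReal.ofReal_add (Pk_nonneg hr hr1 π) hnn, h2, h3, h5]
  -- measurability for swap
  have hmeas : AEMeasurable (Function.uncurry fun (t : AddCircle (2*π)) (u : ℝ) =>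
      (Set.Ioi (dist t θ')).indicator c u) (μ.prod (volume.restrict (Ioc (0:ℝ) π))) := by
    have heq : (Function.uncurry fun (t : AddCircle (2*π)) (u : ℝ) =>
        (Set.Ioi (dist t θ')).indicator c u)
        = {q : AddCircle (2*π) × ℝ | dist q.1 θ' < q.2}.indicator (fun q => c q.2) := by
      ext p
      simp [Function.uncurry, Set.indicator_apply, Set.mem_Ioi, Set.mem_setOf_eq]
    rw [heq]
    apply Measurable.aemeasurable
    apply Measurable.indicator
    · exact (ENNReal.measurable_ofReal.comp (continuous_hk hr hr1).measurable).comp measurable_snd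
    · exact isOpen_lt ((continuous_dist.comp (continuous_fst.prodMk continuous_const)).comp
        (continuous_id.prodMap continuous_id)) continuous_snd |>.measurableSet
  -- bound on ball measures
  have hballbd : ∀ u ∈ Ioc (0:ℝ) π, μ (Metric.ball θ' u) ≤ ENNReal.ofReal (max u ε * g ε) := by
    intro u hu
    rcases le_total u ε with h | h
    · have hsub : Metric.ball θ' u ⊆ Metric.closedBall θ' ε := fun x hx =>
        le_of_lt (lt_of_lt_of_le hx h)
      calc μ (Metric.ball θ' u) ≤ μ (Metric.closedBall θ' ε) := measure_mono hsub
        _ ≤ ENNReal.ofReal (ε * g ε) := hball θ' ε hεmem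
        _ = ENNReal.ofReal (max u ε * g ε) := by rw [max_eq_right h]
    · have hgu : g u ≤ g ε := hganti hεmem ⟨hu.1, hu.2⟩ h
      calc μ (Metric.ball θ' u) ≤ μ (Metric.closedBall θ' u) :=
          measure_mono Metric.ball_subset_closedBall
        _ ≤ ENNReal.ofReal (u * g u) := hball θ' u hu
        _ ≤ ENNReal.ofReal (max u ε * g ε) := by
            rw [max_eq_left h]
            exact ENNReal.ofReal_le_ofReal (by nlinarith [hu.1])
  -- the real integral computation
  have hcmax : Continuous fun u : ℝ => hk r u * (max u ε * g ε) :=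
    (continuous_hk hr hr1).mul ((continuous_id.max continuous_const).mul continuous_const)
  have hint1 : ∫ u in (0:ℝ)..ε, hk r u * (max u ε * g ε) = ε * g ε * (Pk r 0 - Pk r ε) := by
    rw [show (∫ u in (0:ℝ)..ε, hk r u * (max u ε * g ε))
        = ∫ u in (0:ℝ)..ε, (ε * g ε) * hk r u from
      intervalIntegral.integral_congr (fun u hu => by
        rw [uIcc_of_le (le_of_lt hε)] at hu
        rw [max_eq_right hu.2]; ring)]
    rw [intervalIntegral.integral_const_mul, integral_hk hr hr1]
  have hint2 : ∫ u in ε..π, hk r u * (max u ε * g ε)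
      = g ε * ((Gk r π - π * Pk r π) - (Gk r ε - ε * Pk r ε)) := by
    rw [show (∫ u in ε..π, hk r u * (max u ε * g ε))
        = ∫ u in ε..π, (g ε) * (u * hk r u) from
      intervalIntegral.integral_congr (fun u hu => by
        rw [uIcc_of_le hεπ] at hu
        rw [max_eq_left hu.1]; ring)]
    rw [intervalIntegral.integral_const_mul, integral_mul_hk hr hr1]
  have hintval : ∫ u in Ioc (0:ℝ) π, hk r u * (max u ε * g ε)
      = ε * g ε * (Pk r 0 - Pk r ε)
        + g ε * ((Gk r π - π * Pk r π) - (Gk r ε - ε * Pk r ε)) := by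
    rw [← intervalIntegral.integral_of_le (le_of_lt hπ), ← hint1, ← hint2]
    exact (intervalIntegral.integral_add_adjacent_intervals
      (hcmax.intervalIntegrable 0 ε) (hcmax.intervalIntegrable ε π)).symm
  -- whole space
  have huniv : μ Set.univ ≤ ENNReal.ofReal (π * g ε) := by
    have h1 : (Set.univ : Set (AddCircle (2*π))) = Metric.closedBall θ' π :=
      Set.eq_univ_of_forall (fun t => hdistle t) |>.symm
    have h2 : g π ≤ g ε := hganti hεmem ⟨hπ, le_refl π⟩ hεπ
    calc μ Set.univ ≤ ENNReal.ofReal (π * g π) := h1 ▸ hball θ' π ⟨hπ, le_refl π⟩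
      _ ≤ ENNReal.ofReal (π * g ε) := ENNReal.ofReal_le_ofReal (by nlinarith)
  -- main chain
  calc ∫⁻ t, ENNReal.ofReal (Pk r (dist t θ')) ∂μ
      = ∫⁻ t, (ENNReal.ofReal (Pk r π)
          + ∫⁻ u in Ioc (0:ℝ) π, (Set.Ioi (dist t θ')).indicator c u) ∂μ :=
        lintegral_congr hdecomp
    _ = ENNReal.ofReal (Pk r π) * μ Set.univ
          + ∫⁻ t, (∫⁻ u in Ioc (0:ℝ) π, (Set.Ioi (dist t θ')).indicator c u) ∂μ := by
        rw [lintegral_add_left measurable_const, lintegral_const]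
    _ = ENNReal.ofReal (Pk r π) * μ Set.univ
          + ∫⁻ u in Ioc (0:ℝ) π, (∫⁻ t, (Set.Ioi (dist t θ')).indicator c u ∂μ) := by
        rw [lintegral_lintegral_swap hmeas]
    _ ≤ ENNReal.ofReal (Pk r π) * ENNReal.ofReal (π * g ε)
          + ∫⁻ u in Ioc (0:ℝ) π, ENNReal.ofReal (hk r u * (max u ε * g ε)) := by
        refine add_le_add (mul_le_mul' le_rfl huniv) (lintegral_mono_ae ?_)
        filter_upwards [ae_restrict_mem measurableSet_Ioc] with u hu
        have hin : ∫⁻ t, (Set.Ioi (dist t θ')).indicator c u ∂μ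
            = c u * μ (Metric.ball θ' u) := by
          rw [show (fun t : AddCircle (2*π) => (Set.Ioi (dist t θ')).indicator c u)
              = (Metric.ball θ' u).indicator (fun _ => c u) from ?_]
          · exact lintegral_indicator_const Metric.isOpen_ball.measurableSet _
          · ext t
            by_cases hb : dist t θ' < u
            · simp [Set.indicator_apply, Metric.mem_ball, hb]
            · simp [Set.indicator_apply, Metric.mem_ball, hb]
        rw [hin]
        calc c u * μ (Metric.ball θ' u) ≤ c u * ENNReal.ofReal (max u ε * g ε) :=
            mul_le_mul' le_rfl (hballbd u hu)
          _ = ENNReal.ofReal (hk r u * (max u ε * g ε)) := by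
              rw [hc, ← ENNReal.ofReal_mul (hk_nonneg hr hr1 (le_of_lt hu.1) hu.2)]
    _ ≤ ENNReal.ofReal (3 * π * g ε) := by
        set A : ℝ := ε * g ε * (Pk r 0 - Pk r ε)
          + g ε * ((Gk r π - π * Pk r π) - (Gk r ε - ε * Pk r ε)) with hA
        have hT : ∫⁻ u in Ioc (0:ℝ) π, ENNReal.ofReal (hk r u * (max u ε * g ε))
            = ENNReal.ofReal A := by
          rw [← ofReal_integral_eq_lintegral_ofReal hcmax.integrableOn_Ioc ?_, hintval]
          filter_upwards [ae_restrict_mem measurableSet_Ioc] with u hu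
          have h1 := hk_nonneg hr hr1 (le_of_lt hu.1) hu.2
          have h2 : 0 ≤ max u ε := le_max_of_le_right hε.le
          positivity
        have hA0 : 0 ≤ A := by
          rw [← hintval]
          apply setIntegral_nonneg measurableSet_Ioc
          intro u hu
          have h1 := hk_nonneg hr hr1 (le_of_lt hu.1) hu.2
          have h2 : 0 ≤ max u ε := le_max_of_le_right hε.le
          positivity
        rw [hT, ← ENNReal.ofReal_mul (Pk_nonneg hr hr1 π),
          ← ENNReal.ofReal_add (mul_nonneg (Pk_nonneg hr hr1 π)
            (mul_nonneg hπ.le hgε.le)) hA0]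
        apply ENNReal.ofReal_le_ofReal
        have hGπ : Gk r π = π := Gk_pi
        have hGε : 0 ≤ Gk r ε := Gk_nonneg hr hr1 hε.le hεπ
        have hP0 : ε * Pk r 0 ≤ 2*π := by
          have hc0 : Pk r 0 = (1+r)/(1-r) := by
            unfold Pk
            rw [Real.cos_zero]
            rw [div_eq_div_iff (by nlinarith) (by nlinarith)]
            ring
          rw [hc0, hεdef]
          have hne : (1:ℝ) - r ≠ 0 := by nlinarith
          have h3 : π * (1-r) * ((1+r)/(1-r)) = π * (1+r) := by
            field_simp
          rw [h3]
          nlinarith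
        have h1 : g ε * (ε * Pk r 0) ≤ g ε * (2*π) :=
          mul_le_mul_of_nonneg_left hP0 hgε.le
        have h2 : 0 ≤ g ε * Gk r ε := mul_nonneg hgε.le hGε
        rw [hA, hGπ]
        nlinarith
  done


/-- If `μ([θ-t,θ+t]) ≤ t g(t)` with `g` positive continuous decreasing, then
`-log |S(re^{iθ})| ≤ 3π g(π(1-r))`. -/
theorem stmt16 (μ : Measure (AddCircle (2 * Real.pi))) [IsFiniteMeasure μ]
    (g : ℝ → ℝ)
    (hgpos : ∀ t ∈ Set.Ioc (0 : ℝ) Real.pi, 0 < g t)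
    (hgcont : ContinuousOn g (Set.Ioc (0 : ℝ) Real.pi))
    (hganti : AntitoneOn g (Set.Ioc (0 : ℝ) Real.pi))
    (hball : ∀ (θ : AddCircle (2 * Real.pi)), ∀ t ∈ Set.Ioc (0 : ℝ) Real.pi,
      μ (Metric.closedBall θ t) ≤ ENNReal.ofReal (t * g t)) :
    ∀ r ∈ Set.Ico (0 : ℝ) 1, ∀ θ : ℝ,
      -Real.log (‖
          (singInnerAngle μ ((r : ℂ) * Complex.exp (θ * Complex.I)))‖) ≤
        3 * Real.pi * g (Real.pi * (1 - r)) := by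
  intro r hr θ
  obtain ⟨hr0, hr1⟩ := hr
  have hπ : (0:ℝ) < π := Real.pi_pos
  set z : ℂ := (r : ℂ) * Complex.exp (θ * Complex.I) with hz
  set θ' : AddCircle (2*π) := (θ : AddCircle (2*π)) with hθ'
  set f : AddCircle (2*π) → ℂ := fun t =>
    ((AddCircle.toCircle t : ℂ) + z) / ((AddCircle.toCircle t : ℂ) - z) with hf
  have htc : Continuous fun t : AddCircle (2*π) => (AddCircle.toCircle t : ℂ) :=
    continuous_subtype_val.comp AddCircle.continuous_toCircle
  have habs : ‖z‖ = r := by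
    rw [hz, norm_mul, Complex.norm_real, Complex.norm_exp_ofReal_mul_I,
      mul_one, Real.norm_of_nonneg hr0]
  have hne : ∀ t : AddCircle (2*π), (AddCircle.toCircle t : ℂ) - z ≠ 0 := by
    intro t hcon
    have h1 : (AddCircle.toCircle t : ℂ) = z := sub_eq_zero.mp hcon
    have h2 := Circle.norm_coe (AddCircle.toCircle t)
    rw [h1, habs] at h2
    exact absurd h2 (by linarith)
  have hcont : Continuous f := (htc.add continuous_const).div (htc.sub continuous_const) hne
  have hint : Integrable f μ := by
    apply hcont.integrable_of_hasCompactSupport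
    exact IsCompact.of_isClosed_subset isCompact_univ (isClosed_tsupport f) (Set.subset_univ _)
  have hre : ∀ t, (f t).re = Pk r (dist t θ') := by
    intro t
    obtain ⟨a, rfl⟩ := QuotientAddGroup.mk_surjective t
    have h1 : (f ↑a).re = Pk r (a - θ) := by
      rw [hf]
      simp only
      rw [toCircle_coe_eq, hz, re_div_eq_Pk hr0 hr1 a θ]
    rw [h1]
    have hcos : Real.cos (dist ((a : ℝ) : AddCircle (2*π)) θ') = Real.cos (a - θ) := by
      rw [dist_eq_norm]
      have h2 : ((a : ℝ) : AddCircle (2*π)) - θ' = ((a - θ : ℝ) : AddCircle (2*π)) := by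
        rw [hθ']
        norm_cast
      rw [h2, cos_norm_addCircle]
    unfold Pk
    rw [hcos]
  have hS : -Real.log (‖singInnerAngle μ z‖) = (∫ t, f t ∂μ).re := by
    rw [singInnerAngle, Complex.norm_exp, Real.log_exp]
    simp
    rfl
  rw [hS]
  have hre2 : (∫ t, f t ∂μ).re = ∫ t, (f t).re ∂μ := by
    rw [← RCLike.re_to_complex]
    rw [← integral_re hint]
    simp [RCLike.re_to_complex]
  rw [hre2]
  have hcongr : ∫ t, (f t).re ∂μ = ∫ t, Pk r (dist t θ') ∂μ := by
    apply integral_congr_ae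
    exact Filter.Eventually.of_forall hre
  rw [hcongr]
  have hFnn : 0 ≤ᵐ[μ] fun t => Pk r (dist t θ') :=
    Filter.Eventually.of_forall (fun t => Pk_nonneg hr0 hr1 _)
  have hFc : Continuous fun t : AddCircle (2*π) => Pk r (dist t θ') :=
    (continuous_Pk hr0 hr1).comp (continuous_id.dist continuous_const)
  rw [integral_eq_lintegral_of_nonneg_ae hFnn hFc.aestronglyMeasurable]
  have hεmem : π * (1 - r) ∈ Set.Ioc (0:ℝ) π := ⟨by nlinarith, by nlinarith⟩
  have hgε := hgpos _ hεmem
  exact ENNReal.toReal_le_of_le_ofReal (by positivity)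
    (key_est μ g hgpos hganti hball hr0 hr1 θ')
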